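/- arXiv:2509.14017 — 2 statements merged into one kernel-verified Lean document; each statement's English description precedes it below -/
import Mathlib

section
/- Let -∞ < b < c < d < ∞, let μ be a finite Radon measure on [c,d], and set t = b + √((d-b)(c-b)). Then the integral operator from L²_μ([c,d]) to L¹((-∞,b]) with kernel ((y-t)/(t-z))·1/(y-z) has operator norm at most (1/2)·μ([c,d])^{1/2}·log((d-b)/(c-b)). -/
open MeasureTheory ENNReal


lemma zol_aux_int (b p q : ℝ) (hbp : b < p) (hpq : p ≤ q) :
    ∫⁻ z in Set.Iic b, ENNReal.ofReal ((q - p) / ((p - z) * (q - z))) ≤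
      ENNReal.ofReal (Real.log ((q - b) / (p - b))) := by
  have hbq : b < q := lt_of_lt_of_le hbp hpq
  have hU : Set.Iic b = ⋃ n : ℕ, Set.Ioc (b - n) b := by
    ext x
    simp only [Set.mem_Iic, Set.mem_iUnion, Set.mem_Ioc]
    constructor
    · intro hx
      obtain ⟨n, hn⟩ := exists_nat_gt (b - x)
      exact ⟨n, by linarith, hx⟩
    · rintro ⟨n, _, hx⟩; exact hx
  have hdir : Directed (· ⊆ ·) fun n : ℕ => Set.Ioc (b - n) b := by
    intro i j
    refine ⟨max i j, Set.Ioc_subset_Ioc_left ?_, Set.Ioc_subset_Ioc_left ?_⟩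
    · have : (i : ℝ) ≤ max i j := by exact_mod_cast Nat.cast_le.mpr (le_max_left i j)
      linarith
    · have : (j : ℝ) ≤ max i j := by exact_mod_cast Nat.cast_le.mpr (le_max_right i j)
      linarith
  rw [hU, setLIntegral_iUnion_of_directed _ hdir]
  refine iSup_le fun n => ?_
  set a : ℝ := b - n with ha
  have hab : a ≤ b := by
    have : (0:ℝ) ≤ n := Nat.cast_nonneg n
    simp only [ha]; linarith
  have hcont : ContinuousOn (fun z => (q - p) / ((p - z) * (q - z))) (Set.Icc a b) := by
    apply ContinuousOn.div continuousOn_const (by fun_prop)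
    intro z hz
    have h1 : 0 < p - z := by linarith [hz.2]
    have h2 : 0 < q - z := by linarith [hz.2]
    positivity
  have hint : IntegrableOn (fun z => (q - p) / ((p - z) * (q - z))) (Set.Ioc a b) :=
    (hcont.integrableOn_Icc).mono_set Set.Ioc_subset_Icc_self
  have hae : 0 ≤ᶠ[ae (volume.restrict (Set.Ioc a b))] fun z => (q - p) / ((p - z) * (q - z)) := by
    filter_upwards [ae_restrict_mem measurableSet_Ioc] with z hz
    have h1 : 0 < p - z := by linarith [hz.2]
    have h2 : 0 < q - z := by linarith [hz.2]
    have h3 : 0 ≤ q - p := by linarith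
    positivity
  rw [← MeasureTheory.ofReal_integral_eq_lintegral_ofReal hint hae]
  apply ENNReal.ofReal_le_ofReal
  have hderiv : ∀ z ∈ Set.uIcc a b,
      HasDerivAt (fun z => Real.log (q - z) - Real.log (p - z))
        ((q - p) / ((p - z) * (q - z))) z := by
    intro z hz
    rw [Set.uIcc_of_le hab] at hz
    have h1 : 0 < p - z := by linarith [hz.2]
    have h2 : 0 < q - z := by linarith [hz.2]
    have dq : HasDerivAt (fun z : ℝ => q - z) (-1) z := (hasDerivAt_id z).const_sub q
    have dp : HasDerivAt (fun z : ℝ => p - z) (-1) z := (hasDerivAt_id z).const_sub p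
    have d1 : HasDerivAt (fun z => Real.log (q - z)) ((q - z)⁻¹ * (-1)) z :=
      (Real.hasDerivAt_log h2.ne').comp z dq
    have d2 : HasDerivAt (fun z => Real.log (p - z)) ((p - z)⁻¹ * (-1)) z :=
      (Real.hasDerivAt_log h1.ne').comp z dp
    have := d1.sub d2
    refine this.congr_deriv ?_
    have e1 : (q - z)⁻¹ * (-1) - (p - z)⁻¹ * (-1) = (p - z)⁻¹ - (q - z)⁻¹ := by ring
    rw [e1, inv_sub_inv h1.ne' h2.ne']
    congr 1
    ring
  have hint' : IntervalIntegrable (fun z => (q - p) / ((p - z) * (q - z))) volume a b := by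
    rw [intervalIntegrable_iff_integrableOn_Ioc_of_le hab]
    exact hint
  have hFTC := intervalIntegral.integral_eq_sub_of_hasDerivAt hderiv hint'
  rw [← intervalIntegral.integral_of_le hab, hFTC]
  have h1b : 0 < p - b := by linarith
  have h2b : 0 < q - b := by linarith
  have h1a : 0 < p - a := by linarith
  have h2a : 0 < q - a := by linarith
  rw [Real.log_div h2b.ne' h1b.ne']
  have : Real.log (p - a) ≤ Real.log (q - a) := Real.log_le_log h1a (by linarith)
  linarith

lemma zol_aux_abs (b p q M : ℝ) (hbp : b < p) (hbq : b < q)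
    (h1 : Real.log ((q - b) / (p - b)) ≤ M) (h2 : Real.log ((p - b) / (q - b)) ≤ M) :
    ∫⁻ z in Set.Iic b, ENNReal.ofReal (|q - p| / ((p - z) * (q - z))) ≤ ENNReal.ofReal M := by
  rcases le_total p q with h | h
  · calc ∫⁻ z in Set.Iic b, ENNReal.ofReal (|q - p| / ((p - z) * (q - z)))
        = ∫⁻ z in Set.Iic b, ENNReal.ofReal ((q - p) / ((p - z) * (q - z))) := by
          apply lintegral_congr; intro z; rw [abs_of_nonneg (by linarith)]
      _ ≤ ENNReal.ofReal (Real.log ((q - b) / (p - b))) := zol_aux_int b p q hbp h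
      _ ≤ ENNReal.ofReal M := ENNReal.ofReal_le_ofReal h1
  · calc ∫⁻ z in Set.Iic b, ENNReal.ofReal (|q - p| / ((p - z) * (q - z)))
        = ∫⁻ z in Set.Iic b, ENNReal.ofReal ((p - q) / ((q - z) * (p - z))) := by
          apply lintegral_congr; intro z
          rw [abs_of_nonpos (by linarith), mul_comm, neg_sub]
      _ ≤ ENNReal.ofReal (Real.log ((p - b) / (q - b))) := zol_aux_int b q p hbq h
      _ ≤ ENNReal.ofReal M := ENNReal.ofReal_le_ofReal h2


/-- With `t = b + √((d-b)(c-b))`, the integral operator from `L²_μ([c,d])` to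
`L¹((-∞,b])` with kernel `((y-t)/(t-z)) · 1/(y-z)` has operator norm at most
`(1/2) · μ([c,d])^{1/2} · log((d-b)/(c-b))`. -/
theorem zolotarev_kernel_opNorm_bound (b c d t : ℝ) (hbc : b < c) (hcd : c < d)
    (ht : t = b + Real.sqrt ((d - b) * (c - b)))
    (μ : Measure ℝ) [IsFiniteMeasure μ] (hsupp : μ (Set.Icc c d)ᶜ = 0)
    (g : ℝ → ℂ) :
    ∫⁻ z in Set.Iic b,
        (‖∫ y, (((y : ℂ) - (t : ℂ)) / ((t : ℂ) - (z : ℂ))) * (g y / ((y : ℂ) - (z : ℂ))) ∂μ‖₊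
          : ℝ≥0∞) ≤
      ENNReal.ofReal
          (1 / 2 * Real.sqrt ((μ Set.univ).toReal) * Real.log ((d - b) / (c - b))) *
        eLpNorm g 2 μ := by
  have hdb : 0 < d - b := by linarith
  have hcb : 0 < c - b := by linarith
  set s : ℝ := Real.sqrt ((d - b) * (c - b)) with hsdef
  have hs : 0 < s := Real.sqrt_pos.mpr (by positivity)
  have hs2 : s ^ 2 = (d - b) * (c - b) := Real.sq_sqrt (by positivity)
  have hscb : c - b < s := by nlinarith
  have hsdb : s < d - b := by nlinarith
  have htb : t - b = s := by rw [ht]; ring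
  have hbt : b < t := by linarith
  set L : ℝ := 1 / 2 * Real.log ((d - b) / (c - b)) with hLdef
  have hL0 : 0 ≤ L := by
    have : (1:ℝ) ≤ (d - b) / (c - b) := by rw [le_div_iff₀ hcb]; linarith
    have := Real.log_nonneg this
    rw [hLdef]; linarith
  have hLd : Real.log ((d - b) / s) = L := by
    have hsq : ((d - b) / s) ^ 2 = (d - b) / (c - b) := by
      rw [div_pow, hs2, pow_two, mul_div_mul_left _ _ hdb.ne']
    have h2log : Real.log (((d - b) / s) ^ 2) = 2 * Real.log ((d - b) / s) := by
      rw [Real.log_pow]; norm_num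
    rw [hsq] at h2log
    rw [hLdef]; linarith
  have hLc : Real.log (s / (c - b)) = L := by
    have hsq : (s / (c - b)) ^ 2 = (d - b) / (c - b) := by
      rw [div_pow, hs2, pow_two, mul_comm (d - b) (c - b), mul_div_mul_left _ _ hcb.ne']
    have h2log : Real.log ((s / (c - b)) ^ 2) = 2 * Real.log (s / (c - b)) := by
      rw [Real.log_pow]; norm_num
    rw [hsq] at h2log
    rw [hLdef]; linarith
  have hlog1 : ∀ y ∈ Set.Icc c d, Real.log ((y - b) / (t - b)) ≤ L := by
    intro y hy
    rw [htb]
    have hyb : 0 < y - b := by linarith [hy.1]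
    calc Real.log ((y - b) / s) ≤ Real.log ((d - b) / s) :=
          Real.log_le_log (by positivity) (by gcongr; linarith [hy.2])
      _ = L := hLd
  have hlog2 : ∀ y ∈ Set.Icc c d, Real.log ((t - b) / (y - b)) ≤ L := by
    intro y hy
    rw [htb]
    have hyb : 0 < y - b := by linarith [hy.1]
    calc Real.log (s / (y - b)) ≤ Real.log (s / (c - b)) :=
          Real.log_le_log (by positivity) (by gcongr; linarith [hy.1])
      _ = L := hLc
  by_cases hgm : AEStronglyMeasurable g μ
  · -- measurable case
    obtain ⟨G, hGsm, hgG⟩ := hgm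
    have hGm : Measurable G := hGsm.measurable
    have hrw : ∀ z : ℝ,
        (∫ y, (((y : ℂ) - (t : ℂ)) / ((t : ℂ) - (z : ℂ))) * (g y / ((y : ℂ) - (z : ℂ))) ∂μ)
          = ∫ y, (((y : ℂ) - (t : ℂ)) / ((t : ℂ) - (z : ℂ))) * (G y / ((y : ℂ) - (z : ℂ))) ∂μ := by
      intro z
      apply integral_congr_ae
      filter_upwards [hgG] with y hy
      rw [hy]
    rw [eLpNorm_congr_ae hgG]
    simp only [hrw]
    have hmeasK : Measurable fun p : ℝ × ℝ =>
        (‖(((p.2 : ℂ) - (t : ℂ)) / ((t : ℂ) - (p.1 : ℂ))) * (G p.2 / ((p.2 : ℂ) - (p.1 : ℂ)))‖₊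
          : ℝ≥0∞) := by
      apply Measurable.coe_nnreal_ennreal
      apply Measurable.nnnorm
      apply Measurable.mul
      · exact ((Complex.measurable_ofReal.comp measurable_snd).sub measurable_const).div
          (measurable_const.sub (Complex.measurable_ofReal.comp measurable_fst))
      · exact (hGm.comp measurable_snd).div
          ((Complex.measurable_ofReal.comp measurable_snd).sub
            (Complex.measurable_ofReal.comp measurable_fst))
    have hy_ae : ∀ᵐ y ∂μ, y ∈ Set.Icc c d := by
      rw [ae_iff]
      exact hsupp
    calc ∫⁻ z in Set.Iic b,
          (‖∫ y, (((y : ℂ) - (t : ℂ)) / ((t : ℂ) - (z : ℂ))) * (G y / ((y : ℂ) - (z : ℂ))) ∂μ‖₊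
            : ℝ≥0∞)
        ≤ ∫⁻ z in Set.Iic b, ∫⁻ y,
            (‖(((y : ℂ) - (t : ℂ)) / ((t : ℂ) - (z : ℂ))) * (G y / ((y : ℂ) - (z : ℂ)))‖₊
              : ℝ≥0∞) ∂μ :=
          lintegral_mono fun z => enorm_integral_le_lintegral_enorm _
      _ = ∫⁻ y, (∫⁻ z in Set.Iic b,
            (‖(((y : ℂ) - (t : ℂ)) / ((t : ℂ) - (z : ℂ))) * (G y / ((y : ℂ) - (z : ℂ)))‖₊
              : ℝ≥0∞)) ∂μ :=
          lintegral_lintegral_swap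
            (f := fun (z y : ℝ) =>
              (‖(((y : ℂ) - (t : ℂ)) / ((t : ℂ) - (z : ℂ))) * (G y / ((y : ℂ) - (z : ℂ)))‖₊
                : ℝ≥0∞)) hmeasK.aemeasurable
      _ ≤ ∫⁻ y, ENNReal.ofReal L * ‖G y‖₊ ∂μ := by
          apply lintegral_mono_ae
          filter_upwards [hy_ae] with y hy
          have hby : b < y := lt_of_lt_of_le hbc hy.1
          have step1 : ∀ z ∈ Set.Iic b,
              (‖(((y : ℂ) - (t : ℂ)) / ((t : ℂ) - (z : ℂ))) * (G y / ((y : ℂ) - (z : ℂ)))‖₊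
                : ℝ≥0∞)
              = ENNReal.ofReal (|y - t| / ((t - z) * (y - z))) * (‖G y‖₊ : ℝ≥0∞) := by
            intro z hz
            have hz' : z ≤ b := hz
            have htz : 0 < t - z := by linarith
            have hyz : 0 < y - z := by linarith
            rw [← enorm_eq_nnnorm, ← enorm_eq_nnnorm, ← ofReal_norm, ← ofReal_norm,
              ← ENNReal.ofReal_mul (by positivity)]
            congr 1
            rw [norm_mul, norm_div, norm_div]
            have e1 : (y : ℂ) - t = ((y - t : ℝ) : ℂ) := by push_cast; ring
            have e2 : (t : ℂ) - z = ((t - z : ℝ) : ℂ) := by push_cast; ring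
            have e3 : (y : ℂ) - z = ((y - z : ℝ) : ℂ) := by push_cast; ring
            rw [e1, e2, e3, Complex.norm_real, Complex.norm_real, Complex.norm_real,
              Real.norm_eq_abs, Real.norm_eq_abs, Real.norm_eq_abs,
              abs_of_pos htz, abs_of_pos hyz]
            field_simp
          calc ∫⁻ z in Set.Iic b,
                (‖(((y : ℂ) - (t : ℂ)) / ((t : ℂ) - (z : ℂ))) * (G y / ((y : ℂ) - (z : ℂ)))‖₊
                  : ℝ≥0∞)
              = ∫⁻ z in Set.Iic b,
                  ENNReal.ofReal (|y - t| / ((t - z) * (y - z))) * (‖G y‖₊ : ℝ≥0∞) :=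
                setLIntegral_congr_fun measurableSet_Iic step1
            _ = (∫⁻ z in Set.Iic b, ENNReal.ofReal (|y - t| / ((t - z) * (y - z))))
                  * (‖G y‖₊ : ℝ≥0∞) :=
                lintegral_mul_const' _ _ ENNReal.coe_ne_top
            _ ≤ ENNReal.ofReal L * (‖G y‖₊ : ℝ≥0∞) := by
                gcongr
                exact zol_aux_abs b t y L hbt hby (hlog1 y hy) (hlog2 y hy)
      _ = ENNReal.ofReal L * ∫⁻ y, (‖G y‖₊ : ℝ≥0∞) ∂μ :=
          lintegral_const_mul' _ _ ENNReal.ofReal_ne_top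
      _ ≤ ENNReal.ofReal L * (eLpNorm G 2 μ * μ Set.univ ^ (1 / 2 : ℝ)) := by
          gcongr
          have h := eLpNorm_le_eLpNorm_mul_rpow_measure_univ (μ := μ) (p := 1) (q := 2)
            (by norm_num) hGsm.aestronglyMeasurable
          rw [eLpNorm_one_eq_lintegral_enorm] at h
          have he : 1 / (1 : ℝ≥0∞).toReal - 1 / (2 : ℝ≥0∞).toReal = (1 / 2 : ℝ) := by
            rw [ENNReal.toReal_one, ENNReal.toReal_ofNat]
            norm_num
          rw [he] at h
          exact h
      _ = ENNReal.ofReal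
            (1 / 2 * Real.sqrt ((μ Set.univ).toReal) * Real.log ((d - b) / (c - b))) *
            eLpNorm G 2 μ := by
          have hμt : μ Set.univ ≠ ⊤ := measure_ne_top μ _
          have key : ENNReal.ofReal
              (1 / 2 * Real.sqrt ((μ Set.univ).toReal) * Real.log ((d - b) / (c - b)))
              = ENNReal.ofReal L * μ Set.univ ^ (1 / 2 : ℝ) := by
            rw [show 1 / 2 * Real.sqrt ((μ Set.univ).toReal) * Real.log ((d - b) / (c - b))
                = L * Real.sqrt ((μ Set.univ).toReal) by rw [hLdef]; ring]
            rw [ENNReal.ofReal_mul hL0]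
            congr 1
            rw [Real.sqrt_eq_rpow,
              ← ENNReal.ofReal_rpow_of_nonneg ENNReal.toReal_nonneg (by norm_num : (0:ℝ) ≤ 1/2),
              ENNReal.ofReal_toReal hμt]
          rw [key]
          ring
  · -- nonmeasurable case: all inner integrals vanish
    have hz0 : ∀ z ∈ Set.Iic b,
        (∫ y, (((y : ℂ) - (t : ℂ)) / ((t : ℂ) - (z : ℂ))) * (g y / ((y : ℂ) - (z : ℂ))) ∂μ)
          = 0 := by
      intro z hz
      have hz' : z ≤ b := hz
      apply integral_undef
      intro hI
      apply hgm
      obtain ⟨f', hf'm, hff'⟩ := hI.aestronglyMeasurable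
      classical
      set G : ℝ → ℂ := fun y => if y = t then g t else if y = z then g z else
        f' y * ((t : ℂ) - z) * ((y : ℂ) - z) / ((y : ℂ) - t) with hGdef
      have hGm : Measurable G := by
        apply Measurable.ite (measurableSet_eq) measurable_const
        apply Measurable.ite (measurableSet_eq) measurable_const
        exact (((hf'm.measurable.mul_const _).mul
            (Complex.measurable_ofReal.sub measurable_const)).div
          (Complex.measurable_ofReal.sub measurable_const))
      refine ⟨G, hGm.stronglyMeasurable, ?_⟩
      filter_upwards [hff'] with y hy
      by_cases hyt : y = t
      · subst hyt; simp [hGdef]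
      by_cases hyz : y = z
      · subst hyz; simp [hGdef, hyt]
      · have hyt' : (y : ℂ) - t ≠ 0 := sub_ne_zero.mpr (by exact_mod_cast hyt)
        have hyz' : (y : ℂ) - z ≠ 0 := sub_ne_zero.mpr (by exact_mod_cast hyz)
        have htz : t ≠ z := by intro h; linarith [h ▸ hbt]
        have htz' : (t : ℂ) - z ≠ 0 := sub_ne_zero.mpr (by exact_mod_cast htz)
        simp only [hGdef, if_neg hyt, if_neg hyz]
        rw [← hy]
        field_simp
    have hzero : ∫⁻ z in Set.Iic b,
        (‖∫ y, (((y : ℂ) - (t : ℂ)) / ((t : ℂ) - (z : ℂ))) * (g y / ((y : ℂ) - (z : ℂ))) ∂μ‖₊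
          : ℝ≥0∞) = 0 := by
      have h0 : ∫⁻ z in Set.Iic b,
          (‖∫ y, (((y : ℂ) - (t : ℂ)) / ((t : ℂ) - (z : ℂ))) * (g y / ((y : ℂ) - (z : ℂ))) ∂μ‖₊
            : ℝ≥0∞) = ∫⁻ _z in Set.Iic b, (0 : ℝ≥0∞) :=
        setLIntegral_congr_fun measurableSet_Iic
          (fun z hz => by rw [hz0 z hz]; simp)
      rw [h0, lintegral_zero]
    rw [hzero]
    exact zero_le
end

section
/- Let p, q be polynomials of degree at most n with q having no roots in a set E ⊂ ℂ and p having no roots in a set F ⊂ ℂ disjoint from E, and let φ = p/q. Then the kernel C_n(z,y) = (1 - φ(y)/φ(z)) / (y - z), defined for z ∈ F and y ∈ E, has rank at most n: it can be written as a sum of n products f_i(z) g_i(y). -/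
/-- The Zolotarev kernel `C_n(z,y) = (1 - φ(y)/φ(z))/(y - z)` with `φ = p/q` a rational
function of type `(n,n)` has rank at most `n`: it is a sum of `n` separated products. -/
theorem zolotarev_kernel_rank_le (n : ℕ) (p q : Polynomial ℂ)
    (hp : p.natDegree ≤ n) (hq : q.natDegree ≤ n)
    (E F : Set ℂ) (hEF : Disjoint E F)
    (hqE : ∀ y ∈ E, q.eval y ≠ 0) (hpF : ∀ z ∈ F, p.eval z ≠ 0) :
    ∃ f g : Fin n → ℂ → ℂ, ∀ z ∈ F, ∀ y ∈ E,
      (1 - (p.eval y / q.eval y) / (p.eval z / q.eval z)) / (y - z) =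
        ∑ i, f i z * g i y := by
  classical
  refine ⟨fun i z => ((Polynomial.C (p.eval z) * q - Polynomial.C (q.eval z) * p) /
      (Polynomial.X - Polynomial.C z)).coeff i / p.eval z,
    fun i y => y ^ (i : ℕ) / q.eval y, ?_⟩
  intro z hz y hy
  set Nz := Polynomial.C (p.eval z) * q - Polynomial.C (q.eval z) * p with hNzdef
  set Rz := Nz / (Polynomial.X - Polynomial.C z) with hRzdef
  have hyz : y - z ≠ 0 := sub_ne_zero.mpr (fun h => (hEF.ne_of_mem hy hz) h)
  have hpz := hpF z hz
  have hqy := hqE y hy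
  have hdvd : (Polynomial.X - Polynomial.C z) ∣ Nz := by
    rw [Polynomial.dvd_iff_isRoot]
    simp [hNzdef, Polynomial.IsRoot, mul_comm]
  have hNR : Nz = (Polynomial.X - Polynomial.C z) * Rz :=
    (EuclideanDomain.mul_div_cancel' (Polynomial.X_sub_C_ne_zero z) hdvd).symm
  have heval : p.eval z * q.eval y - q.eval z * p.eval y = (y - z) * Rz.eval y := by
    have := congrArg (Polynomial.eval y) hNR
    simpa [hNzdef] using this
  have hdeg : Rz.eval y = ∑ i ∈ Finset.range n, Rz.coeff i * y ^ i := by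
    rcases eq_or_ne Rz 0 with h0 | h0
    · simp [h0]
    · have hdN : Nz.natDegree ≤ n := by
        refine le_trans (Polynomial.natDegree_sub_le _ _) (max_le ?_ ?_)
        · exact le_trans (Polynomial.natDegree_C_mul_le _ _) hq
        · exact le_trans (Polynomial.natDegree_C_mul_le _ _) hp
      have hmul : Nz.natDegree = 1 + Rz.natDegree := by
        rw [hNR, Polynomial.natDegree_mul (Polynomial.X_sub_C_ne_zero z) h0,
          Polynomial.natDegree_X_sub_C]
      have : Rz.natDegree < n := by omega
      exact Polynomial.eval_eq_sum_range' this y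
  have hsum : ∑ i : Fin n, Rz.coeff i / p.eval z * (y ^ (i : ℕ) / q.eval y)
      = Rz.eval y / (p.eval z * q.eval y) := by
    rw [Fin.sum_univ_eq_sum_range (fun i => Rz.coeff i / Polynomial.eval z p *
      (y ^ i / Polynomial.eval y q)) n, hdeg, Finset.sum_div]
    refine Finset.sum_congr rfl fun i _ => ?_
    field_simp
  rw [hsum]
  rcases eq_or_ne (q.eval z) 0 with hqz | hqz
  · rw [hqz] at heval
    rw [hqz, div_zero, div_zero, sub_zero]
    have h2 : Rz.eval y = p.eval z * q.eval y / (y - z) := by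
      field_simp
      linear_combination -heval
    rw [h2]
    field_simp
  · field_simp
    linear_combination heval
end
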